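/- There exist constants c₁, c₂ > 0 such that, for G chosen uniformly at random among all subsets of [N] × [N], the probability that c₁ · N ≤ D_∩(G | 𝓖_{N,N}) ≤ c₂ · N tends to 1 as N → ∞; that is, a random bipartite graph asymptotically almost surely has intersection graph complexity Θ(N). -/

import Mathlib

open Set Filter

section Defs

variable {Γ : Type*}

/-- `StepOK 𝓑 seq ops` says that each set `seq i` in the sequence is obtained as the
union or intersection (according to `ops i`) of two sets, each of which is either a
generator in `𝓑` or an earlier set of the sequence. -/
def StepOK (𝓑 : Set (Set Γ)) {t : ℕ} (seq : Fin t → Set Γ) (ops : Fin t → Bool) : Prop :=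
  ∀ i : Fin t, ∃ X Y : Set Γ,
    (X ∈ 𝓑 ∨ ∃ j : Fin t, j < i ∧ X = seq j) ∧
    (Y ∈ 𝓑 ∨ ∃ j : Fin t, j < i ∧ Y = seq j) ∧
    seq i = if ops i = true then X ∩ Y else X ∪ Y

/-- The number of intersection operations used in the sequence. -/
def interCount {t : ℕ} (ops : Fin t → Bool) : ℕ :=
  (Finset.univ.filter fun i => ops i = true).card

/-- The number of union operations used in the sequence. -/
def unionCount {t : ℕ} (ops : Fin t → Bool) : ℕ :=
  (Finset.univ.filter fun i => ops i = false).card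

/-- The discrete complexity `D(A | 𝓑)`: the minimum length of a sequence generating
`A` from `𝓑` (`⊤` if none exists). -/
noncomputable def Dtot (A : Set Γ) (𝓑 : Set (Set Γ)) : ℕ∞ :=
  sInf {m : ℕ∞ | ∃ (t : ℕ) (seq : Fin (t + 1) → Set Γ) (ops : Fin (t + 1) → Bool),
    StepOK 𝓑 seq ops ∧ seq (Fin.last t) = A ∧ m = ((t + 1 : ℕ) : ℕ∞)}

/-- The intersection complexity `D_∩(A | 𝓑)`: the minimum number of intersection
operations over all sequences generating `A` from `𝓑`. -/
noncomputable def Dcap (A : Set Γ) (𝓑 : Set (Set Γ)) : ℕ∞ :=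
  sInf {m : ℕ∞ | ∃ (t : ℕ) (seq : Fin (t + 1) → Set Γ) (ops : Fin (t + 1) → Bool),
    StepOK 𝓑 seq ops ∧ seq (Fin.last t) = A ∧ m = ((interCount ops : ℕ) : ℕ∞)}

/-- The union complexity `D_∪(A | 𝓑)`. -/
noncomputable def Dcup (A : Set Γ) (𝓑 : Set (Set Γ)) : ℕ∞ :=
  sInf {m : ℕ∞ | ∃ (t : ℕ) (seq : Fin (t + 1) → Set Γ) (ops : Fin (t + 1) → Bool),
    StepOK 𝓑 seq ops ∧ seq (Fin.last t) = A ∧ m = ((unionCount ops : ℕ) : ℕ∞)}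

/-- Simultaneous discrete complexity `D(A_1, …, A_ℓ | 𝓑)` of generating every set in
the family `As` from `𝓑`. -/
noncomputable def DtotSim (As : Set (Set Γ)) (𝓑 : Set (Set Γ)) : ℕ∞ :=
  sInf {m : ℕ∞ | ∃ (t : ℕ) (seq : Fin (t + 1) → Set Γ) (ops : Fin (t + 1) → Bool),
    StepOK 𝓑 seq ops ∧ (∀ A ∈ As, ∃ i, seq i = A) ∧ m = ((t + 1 : ℕ) : ℕ∞)}

/-- Simultaneous intersection complexity. -/
noncomputable def DcapSim (As : Set (Set Γ)) (𝓑 : Set (Set Γ)) : ℕ∞ :=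
  sInf {m : ℕ∞ | ∃ (t : ℕ) (seq : Fin (t + 1) → Set Γ) (ops : Fin (t + 1) → Bool),
    StepOK 𝓑 seq ops ∧ (∀ A ∈ As, ∃ i, seq i = A) ∧ m = ((interCount ops : ℕ) : ℕ∞)}

/-- Simultaneous union complexity. -/
noncomputable def DcupSim (As : Set (Set Γ)) (𝓑 : Set (Set Γ)) : ℕ∞ :=
  sInf {m : ℕ∞ | ∃ (t : ℕ) (seq : Fin (t + 1) → Set Γ) (ops : Fin (t + 1) → Bool),
    StepOK 𝓑 seq ops ∧ (∀ A ∈ As, ∃ i, seq i = A) ∧ m = ((unionCount ops : ℕ) : ℕ∞)}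

/-- A semi-filter over `U`: a nonempty, upward-closed (within `U`) family of subsets
of `U` not containing `∅`. -/
def SemiFilter (U : Set Γ) (F : Set (Set Γ)) : Prop :=
  F.Nonempty ∧ (∀ S ∈ F, S ⊆ U) ∧
    (∀ S ∈ F, ∀ T : Set Γ, S ⊆ T → T ⊆ U → T ∈ F) ∧ ∅ ∉ F

/-- `F` is above the element `w` with respect to `𝓑` and `U`. -/
def Above (𝓑 : Set (Set Γ)) (U : Set Γ) (F : Set (Set Γ)) (w : Γ) : Prop :=
  ∀ B ∈ 𝓑, w ∈ B → B ∩ U ∈ F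

/-- `F` preserves the pair `p = (E, H)`. -/
def PreservesPair (F : Set (Set Γ)) (p : Set Γ × Set Γ) : Prop :=
  p.1 ∈ F → p.2 ∈ F → p.1 ∩ p.2 ∈ F

/-- `Λ` is a family of pairs of subsets of `U = Aᶜ` such that no semi-filter over `U`
both preserves `Λ` and is above some element of `A`. -/
def Covers (A : Set Γ) (𝓑 : Set (Set Γ)) (Λ : Finset (Set Γ × Set Γ)) : Prop :=
  (∀ p ∈ Λ, p.1 ⊆ Aᶜ ∧ p.2 ⊆ Aᶜ) ∧
    ¬∃ (F : Set (Set Γ)) (a : Γ), SemiFilter Aᶜ F ∧ a ∈ A ∧ Above 𝓑 Aᶜ F a ∧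
      ∀ p ∈ Λ, PreservesPair F p

/-- The cover complexity `ρ(A, 𝓑)`. -/
noncomputable def rho (A : Set Γ) (𝓑 : Set (Set Γ)) : ℕ∞ :=
  sInf {m : ℕ∞ | ∃ Λ : Finset (Set Γ × Set Γ), Covers A 𝓑 Λ ∧ m = ((Λ.card : ℕ) : ℕ∞)}

/-- A semi-ultra-filter over `U`: a semi-filter containing, for every `A' ⊆ U`, at
least one of `A'` and `U \ A'`. -/
def SemiUltraFilter (U : Set Γ) (F : Set (Set Γ)) : Prop :=
  SemiFilter U F ∧ ∀ A' : Set Γ, A' ⊆ U → (A' ∈ F ∨ U \ A' ∈ F)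

/-- The conondeterministic cover complexity `ρ_ultra(A, 𝓑)`. -/
noncomputable def rhoUltra (A : Set Γ) (𝓑 : Set (Set Γ)) : ℕ∞ :=
  sInf {m : ℕ∞ | ∃ Λ : Finset (Set Γ × Set Γ),
    (∀ p ∈ Λ, p.1 ⊆ Aᶜ ∧ p.2 ⊆ Aᶜ) ∧
    (¬∃ (F : Set (Set Γ)) (a : Γ), SemiUltraFilter Aᶜ F ∧ a ∈ A ∧ Above 𝓑 Aᶜ F a ∧
      ∀ p ∈ Λ, PreservesPair F p) ∧
    m = ((Λ.card : ℕ) : ℕ∞)}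

/-- One step of the evaluation of a syntactic (possibly cyclic) sequence: an argument
is either a reference to a member of the sequence or a fixed generator set. -/
def cycEval {t : ℕ} (arg1 arg2 : Fin t → Fin t ⊕ Set Γ) (ops : Fin t → Bool) :
    ℕ → Fin t → Set Γ
  | 0 => fun _ => ∅
  | j + 1 => fun i =>
      cycEval arg1 arg2 ops j i ∪
        (if ops i = true then
          Sum.elim (cycEval arg1 arg2 ops j) id (arg1 i) ∩
            Sum.elim (cycEval arg1 arg2 ops j) id (arg2 i)
        else
          Sum.elim (cycEval arg1 arg2 ops j) id (arg1 i) ∪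
            Sum.elim (cycEval arg1 arg2 ops j) id (arg2 i))

/-- The fixed set arguments of a syntactic sequence must be generators from `𝓑`. -/
def ArgsOK (𝓑 : Set (Set Γ)) {t : ℕ} (arg1 arg2 : Fin t → Fin t ⊕ Set Γ) : Prop :=
  ∀ i : Fin t, (∀ B : Set Γ, arg1 i = Sum.inr B → B ∈ 𝓑) ∧
    (∀ B : Set Γ, arg2 i = Sum.inr B → B ∈ 𝓑)

/-- The cyclic intersection complexity `D°_∩(A | 𝓑)`: the minimum number of
intersection operations over all syntactic sequences generating `A` from `𝓑`. -/
noncomputable def DcapCyc (A : Set Γ) (𝓑 : Set (Set Γ)) : ℕ∞ :=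
  sInf {m : ℕ∞ | ∃ (t : ℕ) (arg1 arg2 : Fin (t + 1) → Fin (t + 1) ⊕ Set Γ)
      (ops : Fin (t + 1) → Bool),
    ArgsOK 𝓑 arg1 arg2 ∧
    (∃ j : ℕ, ∀ j' ≥ j, cycEval arg1 arg2 ops j' (Fin.last t) = A) ∧
    m = ((interCount ops : ℕ) : ℕ∞)}

end Defs

/-- The row star `R_i ⊆ [N] × [M]`. -/
def rowSet (N M : ℕ) (i : Fin N) : Set (Fin N × Fin M) := {p | p.1 = i}

/-- The column star `C_j ⊆ [N] × [M]`. -/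
def colSet (N M : ℕ) (j : Fin M) : Set (Fin N × Fin M) := {p | p.2 = j}

/-- The generators `𝓖_{N,M}` of graph complexity: all row stars and column stars. -/
def graphGens (N M : ℕ) : Set (Set (Fin N × Fin M)) :=
  Set.range (rowSet N M) ∪ Set.range (colSet N M)

/-- The generators `𝓑_m` of Boolean circuit complexity over `{0,1}^m`:
all sets `B_i = {v : v_i = 1}` and their complements. -/
def cubeGens (m : ℕ) : Set (Set (Fin m → Bool)) :=
  {S | ∃ i : Fin m, S = {v | v i = true} ∨ S = {v | v i = false}}

/-- `bin : [N] → {0,1}^n` for `N = 2^n`: the element `k` (representing the integer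
`k + 1`) maps to the string `w` with `num(w) = k`, i.e. position `j` holds bit
`n - 1 - j` of `k`. -/
def binMap (n : ℕ) (k : Fin (2 ^ n)) : Fin n → Bool :=
  fun j => (k : ℕ).testBit (n - 1 - (j : ℕ))

/-- The bijection `φ : [N] × [N] → {0,1}^{2n}`, `φ(u, v) = bin(u)bin(v)`. -/
def phi (n : ℕ) (p : Fin (2 ^ n) × Fin (2 ^ n)) : Fin (2 * n) → Bool :=
  fun j =>
    if h : (j : ℕ) < n then binMap n p.1 ⟨(j : ℕ), h⟩
    else binMap n p.2 ⟨(j : ℕ) - n, by have := j.isLt; omega⟩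

/-- The canonical family `𝓕_e` for an edge `e = (u, v)` of a graph `G`:
all `W ⊆ Ḡ` containing `R_u ∩ Ḡ` or `C_v ∩ Ḡ`. -/
def canonFam (N : ℕ) (G : Set (Fin N × Fin N)) (e : Fin N × Fin N) :
    Set (Set (Fin N × Fin N)) :=
  {W | W ⊆ Gᶜ ∧ (rowSet N N e.1 ∩ Gᶜ ⊆ W ∨ colSet N N e.2 ∩ Gᶜ ⊆ W)}

/-- The canonical cover complexity `ρ_can(G, 𝓖_{N,N})`: the minimum size of a family
`Λ` of pairs of subsets of `Ḡ` such that every canonical semi-filter `𝓕_e`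
(for `e ∈ G`, when it is a semi-filter) fails to preserve some pair in `Λ`. -/
noncomputable def rhoCan (N : ℕ) (G : Set (Fin N × Fin N)) : ℕ∞ :=
  sInf {m : ℕ∞ | ∃ Λ : Finset (Set (Fin N × Fin N) × Set (Fin N × Fin N)),
    (∀ p ∈ Λ, p.1 ⊆ Gᶜ ∧ p.2 ⊆ Gᶜ) ∧
    (∀ e ∈ G, SemiFilter Gᶜ (canonFam N G e) →
      ∃ p ∈ Λ, ¬ PreservesPair (canonFam N G e) p) ∧
    m = ((Λ.card : ℕ) : ℕ∞)}


/-! ### Auxiliary machinery for the proof -/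

section UpperAux

variable {Γ' : Type*} {𝓑 : Set (Set Γ')}

/-- Sets generable from `𝓑` with at most `c` intersections (formula version). -/
inductive GenC (𝓑 : Set (Set Γ')) : Set Γ' → ℕ → Prop
  | base {B} : B ∈ 𝓑 → GenC 𝓑 B 0
  | union {A B a b} : GenC 𝓑 A a → GenC 𝓑 B b → GenC 𝓑 (A ∪ B) (a + b)
  | inter {A B a b} : GenC 𝓑 A a → GenC 𝓑 B b → GenC 𝓑 (A ∩ B) (a + b + 1)

def catFun {α : Type*} (ta tb : ℕ) (fA : Fin (ta+1) → α) (fB : Fin (tb+1) → α) (z : α) :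
    Fin (ta+tb+2+1) → α :=
  fun i => if h : i.1 < ta+1 then fA ⟨i.1, h⟩
    else if h2 : i.1 < ta+tb+2 then fB ⟨i.1-(ta+1), by omega⟩
    else z

lemma catFun_lo {α : Type*} {ta tb : ℕ} {fA : Fin (ta+1) → α} {fB : Fin (tb+1) → α} {z : α}
    {i : Fin (ta+tb+2+1)} (h : i.1 < ta+1) : catFun ta tb fA fB z i = fA ⟨i.1, h⟩ := by
  simp only [catFun, dif_pos h]

lemma catFun_mid {α : Type*} {ta tb : ℕ} {fA : Fin (ta+1) → α} {fB : Fin (tb+1) → α} {z : α}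
    {i : Fin (ta+tb+2+1)} (h : ¬ i.1 < ta+1) (h2 : i.1 < ta+tb+2) :
    catFun ta tb fA fB z i = fB ⟨i.1-(ta+1), by omega⟩ := by
  simp only [catFun, dif_neg h, dif_pos h2]

lemma catFun_hi {α : Type*} {ta tb : ℕ} {fA : Fin (ta+1) → α} {fB : Fin (tb+1) → α} {z : α}
    {i : Fin (ta+tb+2+1)} (h : ¬ i.1 < ta+1) (h2 : ¬ i.1 < ta+tb+2) :
    catFun ta tb fA fB z i = z := by
  simp only [catFun, dif_neg h, dif_neg h2]

set_option linter.unreachableTactic false in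
set_option linter.unusedTactic false in
lemma concat_seq {ta tb : ℕ} {seqA : Fin (ta+1) → Set Γ'} {opsA : Fin (ta+1) → Bool}
    {seqB : Fin (tb+1) → Set Γ'} {opsB : Fin (tb+1) → Bool}
    (hA : StepOK 𝓑 seqA opsA) (hB : StepOK 𝓑 seqB opsB) (op : Bool) :
    ∃ (seq : Fin (ta+tb+2+1) → Set Γ') (ops : Fin (ta+tb+2+1) → Bool),
      StepOK 𝓑 seq ops ∧
      seq (Fin.last (ta+tb+2)) =
        (if op then seqA (Fin.last ta) ∩ seqB (Fin.last tb)
         else seqA (Fin.last ta) ∪ seqB (Fin.last tb)) ∧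
      interCount ops ≤ interCount opsA + interCount opsB + (if op then 1 else 0) := by
  classical
  set A := seqA (Fin.last ta) with hAdef
  set B := seqB (Fin.last tb) with hBdef
  refine ⟨catFun ta tb seqA seqB (if op then A ∩ B else A ∪ B),
    catFun ta tb opsA opsB op, ?_, ?_, ?_⟩
  · intro i
    by_cases h : i.1 < ta+1
    · obtain ⟨X, Y, hX, hY, hstep⟩ := hA ⟨i.1, h⟩
      refine ⟨X, Y, ?_, ?_, ?_⟩
      · rcases hX with hX | ⟨j, hj, hXj⟩
        · exact Or.inl hX
        · exact Or.inr ⟨⟨j.1, by omega⟩, by simpa [Fin.lt_def] using hj,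
            by rw [hXj, catFun_lo (show (j.1:ℕ) < ta+1 from j.2)]⟩
      · rcases hY with hY | ⟨j, hj, hYj⟩
        · exact Or.inl hY
        · exact Or.inr ⟨⟨j.1, by omega⟩, by simpa [Fin.lt_def] using hj,
            by rw [hYj, catFun_lo (show (j.1:ℕ) < ta+1 from j.2)]⟩
      · rw [catFun_lo h, catFun_lo h]
        exact hstep
    · by_cases h2 : i.1 < ta+tb+2
      · obtain ⟨X, Y, hX, hY, hstep⟩ := hB ⟨i.1-(ta+1), by omega⟩
        refine ⟨X, Y, ?_, ?_, ?_⟩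
        · rcases hX with hX | ⟨j, hj, hXj⟩
          · exact Or.inl hX
          · refine Or.inr ⟨⟨j.1 + (ta+1), by have := j.2; omega⟩, ?_, ?_⟩
            · have hj' : (j:ℕ) < i.1 - (ta+1) := hj
              show (j:ℕ) + (ta+1) < (i:ℕ); omega
            · rw [hXj, catFun_mid (by simp; omega) (by have := j.2; simp; omega)]
              congr 1; ext; simp
        · rcases hY with hY | ⟨j, hj, hYj⟩
          · exact Or.inl hY
          · refine Or.inr ⟨⟨j.1 + (ta+1), by have := j.2; omega⟩, ?_, ?_⟩
            · have hj' : (j:ℕ) < i.1 - (ta+1) := hj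
              show (j:ℕ) + (ta+1) < (i:ℕ); omega
            · rw [hYj, catFun_mid (by simp; omega) (by have := j.2; simp; omega)]
              congr 1; ext; simp
        · rw [catFun_mid h h2, catFun_mid h h2]
          exact hstep
      · refine ⟨A, B, ?_, ?_, ?_⟩
        · refine Or.inr ⟨⟨ta, by omega⟩, ?_, ?_⟩
          · show ta < (i:ℕ); omega
          · rw [catFun_lo (by show ta < ta+1; omega :
                ((⟨ta, by omega⟩ : Fin (ta+tb+2+1)) : ℕ) < ta+1), hAdef]
            all_goals congr 1
            all_goals ext
            all_goals simp [Fin.last]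
        · refine Or.inr ⟨⟨ta+tb+1, by omega⟩, ?_, ?_⟩
          · show ta+tb+1 < (i:ℕ); omega
          · rw [catFun_mid (by show ¬ ta+tb+1 < ta+1; omega :
                ¬ ((⟨ta+tb+1, by omega⟩ : Fin (ta+tb+2+1)) : ℕ) < ta+1)
              (by show ta+tb+1 < ta+tb+2; omega :
                ((⟨ta+tb+1, by omega⟩ : Fin (ta+tb+2+1)) : ℕ) < ta+tb+2), hBdef]
            all_goals congr 1
            all_goals ext
            all_goals simp [Fin.last]
            all_goals omega
        · rw [catFun_hi h h2, catFun_hi h h2]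
          all_goals (cases op <;> simp)
  · rw [catFun_hi (by simp [Fin.last]; omega) (by simp [Fin.last])]
  · unfold interCount
    have hsub : (Finset.univ.filter fun i : Fin (ta+tb+2+1) =>
          catFun ta tb opsA opsB op i = true) ⊆
        (((Finset.univ.filter fun i : Fin (ta+1) => opsA i = true).image
          (fun j => (⟨j.1, by omega⟩ : Fin (ta+tb+2+1)))) ∪
        ((Finset.univ.filter fun i : Fin (tb+1) => opsB i = true).image
          (fun j => (⟨j.1 + (ta+1), by have := j.2; omega⟩ : Fin (ta+tb+2+1))))) ∪
        (if op then {Fin.last (ta+tb+2)} else ∅) := by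
      intro i hi
      simp only [Finset.mem_filter, Finset.mem_univ, true_and] at hi
      simp only [Finset.mem_union, Finset.mem_image, Finset.mem_filter, Finset.mem_univ,
        true_and]
      by_cases h : i.1 < ta+1
      · rw [catFun_lo h] at hi
        exact Or.inl (Or.inl ⟨⟨i.1, h⟩, hi, by ext; simp⟩)
      · by_cases h2 : i.1 < ta+tb+2
        · rw [catFun_mid h h2] at hi
          refine Or.inl (Or.inr ⟨⟨i.1 - (ta+1), by omega⟩, hi, ?_⟩)
          ext; simp; omega
        · rw [catFun_hi h h2] at hi
          refine Or.inr ?_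
          rw [hi]
          have : i = Fin.last (ta+tb+2) := by ext; simp [Fin.last]; omega
          simp [this]
    refine le_trans (Finset.card_le_card hsub) ?_
    refine le_trans (Finset.card_union_le _ _) ?_
    gcongr
    · exact le_trans (Finset.card_union_le _ _)
        (by gcongr <;> exact Finset.card_image_le)
    · cases op <;> simp

lemma GenC.exists_seq {A : Set Γ'} {c : ℕ} (h : GenC 𝓑 A c) :
    ∃ (t : ℕ) (seq : Fin (t+1) → Set Γ') (ops : Fin (t+1) → Bool),
      StepOK 𝓑 seq ops ∧ seq (Fin.last t) = A ∧ interCount ops ≤ c := by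
  induction h with
  | base hB =>
      rename_i B
      refine ⟨0, fun _ => B, fun _ => false, ?_, rfl, ?_⟩
      · intro i
        exact ⟨B, B, Or.inl hB, Or.inl hB, by simp⟩
      · simp [interCount]
  | union hA hB ihA ihB =>
      obtain ⟨ta, seqA, opsA, hSA, hlA, hcA⟩ := ihA
      obtain ⟨tb, seqB, opsB, hSB, hlB, hcB⟩ := ihB
      obtain ⟨seq, ops, hS, hl, hc⟩ := concat_seq hSA hSB false
      refine ⟨ta+tb+2, seq, ops, hS, by rw [hl]; simp [hlA, hlB], ?_⟩
      refine le_trans hc ?_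
      norm_num
      omega
  | inter hA hB ihA ihB =>
      obtain ⟨ta, seqA, opsA, hSA, hlA, hcA⟩ := ihA
      obtain ⟨tb, seqB, opsB, hSB, hlB, hcB⟩ := ihB
      obtain ⟨seq, ops, hS, hl, hc⟩ := concat_seq hSA hSB true
      refine ⟨ta+tb+2, seq, ops, hS, by rw [hl]; simp [hlA, hlB], ?_⟩
      refine le_trans hc ?_
      norm_num
      omega

lemma GenC.dcap_le {A : Set Γ'} {c : ℕ} (h : GenC 𝓑 A c) : Dcap A 𝓑 ≤ c := by
  obtain ⟨t, seq, ops, h1, h2, h3⟩ := h.exists_seq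
  refine le_trans (sInf_le ⟨t, seq, ops, h1, h2, rfl⟩) ?_
  exact_mod_cast h3

lemma GenC.biUnion {α : Type*} [DecidableEq α] {s : Finset α} (hs : s.Nonempty)
    {f : α → Set Γ'} {c : α → ℕ} (h : ∀ x ∈ s, GenC 𝓑 (f x) (c x)) :
    GenC 𝓑 (⋃ x ∈ s, f x) (∑ x ∈ s, c x) := by
  induction hs using Finset.Nonempty.cons_induction with
  | singleton a => simpa using h a (by simp)
  | cons a s ha hs ih =>
      rw [Finset.sum_cons]
      have : (⋃ x ∈ Finset.cons a s ha, f x) = f a ∪ ⋃ x ∈ s, f x := by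
        simp [Set.iUnion_or, Set.iUnion_union_distrib]
      rw [this]
      exact GenC.union (h a (by simp)) (ih fun x hx => h x (by simp [hx]))

lemma rowSet_mem {N M : ℕ} (i : Fin N) : rowSet N M i ∈ graphGens N M :=
  Or.inl ⟨i, rfl⟩

lemma colSet_mem {N M : ℕ} (j : Fin M) : colSet N M j ∈ graphGens N M :=
  Or.inr ⟨j, rfl⟩

lemma dcap_upper {N : ℕ} (hN : 2 ≤ N) (G : Finset (Fin N × Fin N)) :
    Dcap (↑G : Set (Fin N × Fin N)) (graphGens N N) ≤ (N : ℕ∞) := by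
  classical
  rcases G.eq_empty_or_nonempty with rfl | hne
  · have h0 : ((∅ : Finset (Fin N × Fin N)) : Set (Fin N × Fin N)) =
        rowSet N N ⟨0, by omega⟩ ∩ rowSet N N ⟨1, by omega⟩ := by
      ext p
      simp [rowSet]
      intro h
      rw [h]
      intro hc
      have := congrArg Fin.val hc
      simp at this
    rw [h0]
    refine le_trans (GenC.dcap_le (GenC.inter (GenC.base (rowSet_mem _))
      (GenC.base (rowSet_mem _)))) ?_
    exact_mod_cast by omega
  · set I : Finset (Fin N) := G.image Prod.fst with hI
    set S : Fin N → Finset (Fin N) := fun i => (G.filter fun p => p.1 = i).image Prod.snd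
      with hS
    have hdecomp : (↑G : Set (Fin N × Fin N)) =
        ⋃ i ∈ I, (rowSet N N i ∩ ⋃ j ∈ S i, colSet N N j) := by
      ext ⟨a, b⟩
      simp only [Finset.coe_sort_coe, Set.mem_iUnion, Finset.mem_coe, Set.mem_inter_iff,
        Finset.mem_image, Finset.mem_filter, rowSet, colSet, Set.mem_setOf_eq, hI, hS,
        Finset.mem_image]
      constructor
      · intro hab
        exact ⟨a, ⟨⟨(a,b), hab, rfl⟩, rfl, b, ⟨⟨(a,b), ⟨hab, rfl⟩, rfl⟩, rfl⟩⟩⟩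
      · rintro ⟨i, ⟨-, hai, j, ⟨⟨p, ⟨hp, hpi⟩, hpj⟩, hbj⟩⟩⟩
        have : p = (a, b) := by
          ext
          · rw [hpi, ← hai]
          · rw [hpj, ← hbj]
        rwa [this] at hp
    rw [hdecomp]
    have hgen : GenC (graphGens N N) (⋃ i ∈ I, (rowSet N N i ∩ ⋃ j ∈ S i, colSet N N j))
        (∑ _i ∈ I, 1) := by
      refine GenC.biUnion (by simp [hI, hne]) ?_
      intro i hi
      have hSne : (S i).Nonempty := by
        simp only [hI, Finset.mem_image] at hi
        obtain ⟨p, hp, hpi⟩ := hi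
        exact ⟨p.2, by
          simp only [hS, Finset.mem_image, Finset.mem_filter]
          exact ⟨p, ⟨hp, hpi⟩, rfl⟩⟩
      have h2 : GenC (graphGens N N) (⋃ j ∈ S i, colSet N N j) (∑ _j ∈ S i, 0) :=
        GenC.biUnion hSne fun j _ => GenC.base (colSet_mem j)
      have := GenC.inter (GenC.base (rowSet_mem i)) h2
      simpa using this
    refine le_trans (GenC.dcap_le hgen) ?_
    have : (∑ _i ∈ I, 1) = I.card := by simp
    rw [this]
    exact_mod_cast Nat.cast_le.mpr (le_trans (Finset.card_le_univ I) (by simp))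

end UpperAux

section LowerAux

variable {Γ' : Type*} {ι : Type*}

/-- Evaluation of the gates of a description. -/
noncomputable def gEval (g : ι → Set Γ') {k : ℕ}
    (d : Fin k → Set (ι ⊕ Fin k) × Set (ι ⊕ Fin k)) (m : Fin k) : Set Γ' :=
  (⋃ x ∈ (d m).1, Sum.elim g (fun m' : Fin k =>
      if h : m'.1 < m.1 then gEval g d m' else ∅) x) ∩
  (⋃ x ∈ (d m).2, Sum.elim g (fun m' : Fin k =>
      if h : m'.1 < m.1 then gEval g d m' else ∅) x)
termination_by m.1
decreasing_by all_goals exact h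

/-- Evaluation of a full description. -/
noncomputable def descEval (g : ι → Set Γ') {k : ℕ}
    (d : Fin k → Set (ι ⊕ Fin k) × Set (ι ⊕ Fin k)) (T : Set (ι ⊕ Fin k)) : Set Γ' :=
  ⋃ x ∈ T, Sum.elim g (gEval g d) x

/-- Structure theorem: everything generated with `k` intersections is the evaluation
of some description with `k` gates. -/
lemma exists_desc (g : ι → Set Γ') {t : ℕ} {seq : Fin (t+1) → Set Γ'}
    {ops : Fin (t+1) → Bool} (hS : StepOK (Set.range g) seq ops) :
    ∃ (d : Fin (interCount ops) → Set (ι ⊕ Fin (interCount ops)) ×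
        Set (ι ⊕ Fin (interCount ops))) (T : Set (ι ⊕ Fin (interCount ops))),
      descEval g d T = seq (Fin.last t) := by
  classical
  set k := interCount ops with hk
  set gates : Finset (Fin (t+1)) := Finset.univ.filter (fun i => ops i = true) with hgates
  have hcard : gates.card = k := rfl
  set e := gates.orderIsoOfFin hcard with he
  set gFun : Fin k → Fin (t+1) := fun m => (e m).1 with hgFun
  have hgFun_mono : StrictMono gFun := fun a b hab => by
    exact e.strictMono hab
  have hgFun_mem : ∀ m, ops (gFun m) = true := fun m => by
    have := (e m).2
    simp only [hgates, Finset.mem_filter] at this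
    exact this.2
  set GVal : Fin k → Set Γ' := fun m => seq (gFun m) with hGVal
  have main : ∀ n : ℕ, ∀ i : Fin (t+1), i.1 < n →
      ∃ T : Set (ι ⊕ Fin k), (∀ m, Sum.inr m ∈ T → gFun m ≤ i) ∧
        seq i = ⋃ x ∈ T, Sum.elim g GVal x := by
    intro n
    induction n with
    | zero => intro i hi; omega
    | succ n ih =>
        intro i hi
        by_cases hop : ops i = true
        · have higate : i ∈ gates := by simp [hgates, hop]
          set m := e.symm ⟨i, higate⟩ with hm
          have hmi : gFun m = i := by
            show ((e (e.symm ⟨i, higate⟩)) : Fin (t+1)) = i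
            rw [OrderIso.apply_symm_apply]
          refine ⟨{Sum.inr m}, ?_, ?_⟩
          · intro m' hm'
            simp only [Set.mem_singleton_iff, Sum.inr.injEq] at hm'
            rw [hm']
            exact le_of_eq hmi
          · simp [GVal, hmi]
        · obtain ⟨X, Y, hX, hY, hstep⟩ := hS i
          rw [if_neg hop] at hstep
          have getT : ∀ Z : Set Γ',
              (Z ∈ Set.range g ∨ ∃ j : Fin (t+1), j < i ∧ Z = seq j) →
              ∃ T : Set (ι ⊕ Fin k), (∀ m, Sum.inr m ∈ T → gFun m ≤ i) ∧
                Z = ⋃ x ∈ T, Sum.elim g GVal x := by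
            rintro Z (⟨idx, hidx⟩ | ⟨j, hj, hZj⟩)
            · exact ⟨{Sum.inl idx}, by simp, by simp [← hidx]⟩
            · obtain ⟨T, hT1, hT2⟩ := ih j (by have : j < i := hj; omega)
              exact ⟨T, fun m hm => le_trans (hT1 m hm) (le_of_lt hj), by rw [hZj, hT2]⟩
          obtain ⟨TX, hTX1, hTX2⟩ := getT X hX
          obtain ⟨TY, hTY1, hTY2⟩ := getT Y hY
          refine ⟨TX ∪ TY, ?_, ?_⟩
          · rintro m (hm | hm)
            exacts [hTX1 m hm, hTY1 m hm]
          · rw [hstep, hTX2, hTY2, Set.biUnion_union]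
  have gate : ∀ m : Fin k, ∃ P Q : Set (ι ⊕ Fin k),
      (∀ m', Sum.inr m' ∈ P → m' < m) ∧ (∀ m', Sum.inr m' ∈ Q → m' < m) ∧
      GVal m = (⋃ x ∈ P, Sum.elim g GVal x) ∩ (⋃ x ∈ Q, Sum.elim g GVal x) := by
    intro m
    obtain ⟨X, Y, hX, hY, hstep⟩ := hS (gFun m)
    rw [if_pos (hgFun_mem m)] at hstep
    have getT : ∀ Z : Set Γ',
        (Z ∈ Set.range g ∨ ∃ j : Fin (t+1), j < gFun m ∧ Z = seq j) →
        ∃ P : Set (ι ⊕ Fin k), (∀ m', Sum.inr m' ∈ P → m' < m) ∧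
          Z = ⋃ x ∈ P, Sum.elim g GVal x := by
      rintro Z (⟨idx, hidx⟩ | ⟨j, hj, hZj⟩)
      · exact ⟨{Sum.inl idx}, by simp, by simp [← hidx]⟩
      · obtain ⟨T, hT1, hT2⟩ := main (j.1+1) j (by omega)
        refine ⟨T, fun m' hm' => ?_, by rw [hZj, hT2]⟩
        have : gFun m' < gFun m := lt_of_le_of_lt (hT1 m' hm') hj
        exact hgFun_mono.lt_iff_lt.mp this
    obtain ⟨P, hP1, hP2⟩ := getT X hX
    obtain ⟨Q, hQ1, hQ2⟩ := getT Y hY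
    refine ⟨P, Q, hP1, hQ1, ?_⟩
    show seq (gFun m) = _
    rw [hstep, hP2, hQ2]
  choose P Q hP hQ hPQ using gate
  set d : Fin k → Set (ι ⊕ Fin k) × Set (ι ⊕ Fin k) := fun m => (P m, Q m) with hd
  have evalEq : ∀ n : ℕ, ∀ m : Fin k, m.1 < n → gEval g d m = GVal m := by
    intro n
    induction n with
    | zero => intro m hm; omega
    | succ n ih =>
        intro m hm
        rw [gEval, hPQ m]
        congr 1
        · refine Set.iUnion₂_congr fun x hx => ?_
          cases x with
          | inl idx => simp
          | inr m' =>
              have h1 : m' < m := hP m m' hx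
              simp only [Sum.elim_inr]
              rw [dif_pos (show m'.1 < m.1 from h1)]
              exact ih m' (by have : m'.1 < m.1 := h1; omega)
        · refine Set.iUnion₂_congr fun x hx => ?_
          cases x with
          | inl idx => simp
          | inr m' =>
              have h1 : m' < m := hQ m m' hx
              simp only [Sum.elim_inr]
              rw [dif_pos (show m'.1 < m.1 from h1)]
              exact ih m' (by have : m'.1 < m.1 := h1; omega)
  obtain ⟨T, hT1, hT2⟩ := main (t+1) (Fin.last t) (by simp [Fin.last])
  refine ⟨d, T, ?_⟩
  rw [descEval, hT2]
  refine Set.iUnion₂_congr fun x hx => ?_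
  cases x with
  | inl idx => simp
  | inr m' => simp [evalEq (m'.1+1) m' (by omega)]

lemma exists_le_of_sInf_le {S : Set ℕ∞} {k : ℕ} (h : sInf S ≤ (k:ℕ∞)) :
    ∃ m ∈ S, m ≤ (k:ℕ∞) := by
  by_contra hc
  push_neg at hc
  have h2 : (k:ℕ∞) + 1 ≤ sInf S := le_sInf fun m hm => Order.add_one_le_of_lt (hc m hm)
  have h3 := le_trans h2 h
  rw [show ((k:ℕ∞)+1) = ((k+1:ℕ):ℕ∞) by push_cast; ring] at h3
  exact absurd (by exact_mod_cast h3) (by omega)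

lemma ncard_biUnion_le' {α : Type*} (n : ℕ) (f : ℕ → Set α) :
    (⋃ k ∈ Finset.range n, f k).ncard ≤ ∑ k ∈ Finset.range n, (f k).ncard := by
  induction n with
  | zero => simp
  | succ n ih =>
      rw [Finset.sum_range_succ]
      have : (⋃ k ∈ Finset.range (n+1), f k) =
          (⋃ k ∈ Finset.range n, f k) ∪ f n := by
        rw [Finset.range_add_one]
        ext x; simp [or_comm]
      rw [this]
      exact le_trans (Set.ncard_union_le _ _) (by omega)

lemma card_desc {ι : Type*} [Fintype ι] (k : ℕ) :
    Fintype.card ((Fin k → Set (ι ⊕ Fin k) × Set (ι ⊕ Fin k)) × Set (ι ⊕ Fin k)) =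
      2 ^ ((Fintype.card ι + k) * (2 * k + 1)) := by
  classical
  rw [Fintype.card_prod, Fintype.card_fun, Fintype.card_prod, Fintype.card_set,
    Fintype.card_sum, Fintype.card_fin]
  rw [← pow_add, ← pow_mul, ← pow_add]
  ring_nf

lemma ncard_dcap_le {Γ' ι : Type*} [Fintype Γ'] [Fintype ι] (g : ι → Set Γ') (k : ℕ) :
    {A : Set Γ' | Dcap A (Set.range g) ≤ (k:ℕ∞)}.ncard ≤
      (k+1) * 2 ^ ((Fintype.card ι + k) * (2 * k + 1)) := by
  classical
  have hsub : {A : Set Γ' | Dcap A (Set.range g) ≤ (k:ℕ∞)} ⊆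
      ⋃ k' ∈ Finset.range (k+1),
        Set.range (fun dT : (Fin k' → Set (ι ⊕ Fin k') × Set (ι ⊕ Fin k')) ×
            Set (ι ⊕ Fin k') => descEval g dT.1 dT.2) := by
    intro A hA
    obtain ⟨m, hm, hmk⟩ := exists_le_of_sInf_le hA
    obtain ⟨t, seq, ops, hS, hlast, hmval⟩ := hm
    subst hmval
    have hic : interCount ops ≤ k := by exact_mod_cast hmk
    obtain ⟨d, T, hdT⟩ := exists_desc g hS
    refine Set.mem_biUnion (by simp; omega : interCount ops ∈ Finset.range (k+1)) ?_
    exact ⟨(d, T), by rw [← hlast, ← hdT]⟩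
  refine le_trans (Set.ncard_le_ncard hsub (Set.toFinite _)) ?_
  refine le_trans (ncard_biUnion_le' (k+1) _) ?_
  have hbound : ∀ k' ∈ Finset.range (k+1),
      (Set.range (fun dT : (Fin k' → Set (ι ⊕ Fin k') × Set (ι ⊕ Fin k')) ×
          Set (ι ⊕ Fin k') => descEval g dT.1 dT.2)).ncard ≤
        2 ^ ((Fintype.card ι + k) * (2 * k + 1)) := by
    intro k' hk'
    simp only [Finset.mem_range] at hk'
    have h1 : (Set.range (fun dT : (Fin k' → Set (ι ⊕ Fin k') × Set (ι ⊕ Fin k')) ×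
        Set (ι ⊕ Fin k') => descEval g dT.1 dT.2)).ncard ≤
        Fintype.card ((Fin k' → Set (ι ⊕ Fin k') × Set (ι ⊕ Fin k')) ×
          Set (ι ⊕ Fin k')) := by
      rw [← Set.image_univ]
      refine le_trans (Set.ncard_image_le (Set.toFinite _)) ?_
      rw [Set.ncard_univ, Nat.card_eq_fintype_card]
    refine le_trans h1 ?_
    rw [card_desc]
    refine Nat.pow_le_pow_right (by omega) ?_
    exact Nat.mul_le_mul (by omega) (by omega)
  calc ∑ k' ∈ Finset.range (k+1), _ ≤
      ∑ _k' ∈ Finset.range (k+1), 2 ^ ((Fintype.card ι + k) * (2 * k + 1)) :=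
        Finset.sum_le_sum hbound
    _ = (k+1) * 2 ^ ((Fintype.card ι + k) * (2 * k + 1)) := by
        rw [Finset.sum_const, Finset.card_range, smul_eq_mul]

lemma bad_count (N k : ℕ) :
    {G : Finset (Fin N × Fin N) |
      Dcap (↑G : Set (Fin N × Fin N)) (graphGens N N) ≤ (k:ℕ∞)}.ncard ≤
      (k+1) * 2 ^ ((N + N + k) * (2*k+1)) := by
  classical
  set g : (Fin N ⊕ Fin N) → Set (Fin N × Fin N) := Sum.elim (rowSet N N) (colSet N N)
    with hg
  have hrange : Set.range g = graphGens N N := Set.Sum.elim_range _ _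
  have hcard := ncard_dcap_le g k
  rw [Fintype.card_sum, Fintype.card_fin] at hcard
  set S := {G : Finset (Fin N × Fin N) |
      Dcap (↑G : Set (Fin N × Fin N)) (graphGens N N) ≤ (k:ℕ∞)} with hSdef
  have h1 : S.ncard = ((fun G : Finset (Fin N × Fin N) => (G : Set (Fin N × Fin N))) ''
      S).ncard :=
    (Set.ncard_image_of_injOn (fun a _ b _ h => Finset.coe_injective h)).symm
  rw [h1]
  refine le_trans (Set.ncard_le_ncard ?_ (Set.toFinite _)) hcard
  rintro A ⟨G, hG, rfl⟩
  show Dcap _ (Set.range g) ≤ _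
  rw [hrange]
  exact hG

lemma arith_bound {N : ℕ} (hN : 64 ≤ N) :
    (N/8+1) * 2 ^ ((N + N + N/8) * (2*(N/8)+1)) ≤ 2 ^ (N*N - N) := by
  set k := N/8 with hk
  have h8 : 8*k ≤ N := by omega
  have hk1 : k+1 ≤ 2^N := le_trans (by omega : k+1 ≤ N+1) (Nat.lt_two_pow_self (n := N))
  calc (k+1) * 2^((N+N+k)*(2*k+1)) ≤ 2^N * 2^((N+N+k)*(2*k+1)) :=
        Nat.mul_le_mul_right _ hk1
    _ = 2^(N + (N+N+k)*(2*k+1)) := by rw [← pow_add]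
    _ ≤ 2^(N*N - N) := by
        refine Nat.pow_le_pow_right (by norm_num) ?_
        have f1 : (8*k)*N ≤ N*N := Nat.mul_le_mul_right N h8
        have f2 : (8*k)*(8*k) ≤ N*N := Nat.mul_le_mul h8 h8
        have f3 : 32*N ≤ N*N := Nat.mul_le_mul_right N (by omega)
        have expand : (N+N+k)*(2*k+1) = 4*(N*k) + 2*N + 2*(k*k) + k := by ring
        have f1' : 8*(k*N) ≤ N*N := by linarith [f1]
        have f2' : 64*(k*k) ≤ N*N := by linarith [f2]
        have hkn : k ≤ N := by omega
        have key : N + (N+N+k)*(2*k+1) + N ≤ N*N := by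
          rw [expand]
          have : N*k = k*N := Nat.mul_comm _ _
          rw [this]
          linarith [f1', f2', f3, hkn]
        omega

end LowerAux


lemma main_bounds {N : ℕ} (hN : 64 ≤ N) :
    1 - (1/2:ℝ)^N ≤
      (({G : Finset (Fin N × Fin N) |
          ENNReal.ofReal (1/8 * N) ≤
            ENat.toENNReal (Dcap (↑G : Set (Fin N × Fin N)) (graphGens N N)) ∧
          ENat.toENNReal (Dcap (↑G : Set (Fin N × Fin N)) (graphGens N N)) ≤
            ENNReal.ofReal (1 * N)}).ncard : ℝ) / (2 : ℝ) ^ (N * N) ∧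
    (({G : Finset (Fin N × Fin N) |
          ENNReal.ofReal (1/8 * N) ≤
            ENat.toENNReal (Dcap (↑G : Set (Fin N × Fin N)) (graphGens N N)) ∧
          ENat.toENNReal (Dcap (↑G : Set (Fin N × Fin N)) (graphGens N N)) ≤
            ENNReal.ofReal (1 * N)}).ncard : ℝ) / (2 : ℝ) ^ (N * N) ≤ 1 := by
  classical
  set E := {G : Finset (Fin N × Fin N) |
      ENNReal.ofReal (1/8 * N) ≤
        ENat.toENNReal (Dcap (↑G : Set (Fin N × Fin N)) (graphGens N N)) ∧
      ENat.toENNReal (Dcap (↑G : Set (Fin N × Fin N)) (graphGens N N)) ≤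
        ENNReal.ofReal (1 * N)} with hE
  have hupper : ∀ G : Finset (Fin N × Fin N),
      ENat.toENNReal (Dcap (↑G : Set (Fin N × Fin N)) (graphGens N N)) ≤
        ENNReal.ofReal (1 * N) := by
    intro G
    have h := dcap_upper (by omega) G
    calc ENat.toENNReal (Dcap (↑G : Set (Fin N × Fin N)) (graphGens N N)) ≤
        ENat.toENNReal ((N:ℕ∞)) := ENat.toENNReal_le.mpr h
      _ = ((N:ℕ) : ENNReal) := by simp
      _ = ENNReal.ofReal (1 * N) := by rw [one_mul, ENNReal.ofReal_natCast]
  have hcompl : Eᶜ ⊆ {G : Finset (Fin N × Fin N) |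
      Dcap (↑G : Set (Fin N × Fin N)) (graphGens N N) ≤ ((N/8 : ℕ) : ℕ∞)} := by
    intro G hG
    simp only [hE, Set.mem_compl_iff, Set.mem_setOf_eq, not_and_or] at hG
    rcases hG with h | h
    · have hlt : ENat.toENNReal (Dcap (↑G : Set (Fin N × Fin N)) (graphGens N N)) <
          ENNReal.ofReal (1/8 * N) := lt_of_not_ge h
      have hdiv : N < 8*(N/8) + 8 := by omega
      have h2 : ENNReal.ofReal (1/8 * N) ≤ ENat.toENNReal (((N/8+1 : ℕ) : ℕ∞)) := by
        have : ENat.toENNReal (((N/8+1 : ℕ) : ℕ∞)) = ((N/8+1 : ℕ) : ENNReal) := by simp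
        rw [this, ← ENNReal.ofReal_natCast]
        refine ENNReal.ofReal_le_ofReal ?_
        have hd : (N:ℝ) < 8*((N/8:ℕ):ℝ) + 8 := by exact_mod_cast hdiv
        push_cast
        linarith
      have h4 : Dcap (↑G : Set (Fin N × Fin N)) (graphGens N N) < ((N/8+1:ℕ) : ℕ∞) :=
        ENat.toENNReal_lt.mp (lt_of_lt_of_le hlt h2)
      have h5 : Dcap (↑G : Set (Fin N × Fin N)) (graphGens N N) < ((N/8:ℕ) : ℕ∞) + 1 := by
        have : ((N/8+1:ℕ) : ℕ∞) = ((N/8:ℕ) : ℕ∞) + 1 := by push_cast; ring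
        rwa [this] at h4
      exact Order.le_of_lt_add_one h5
    · exact absurd (hupper G) h
  have hbad : Eᶜ.ncard ≤ 2^(N*N-N) :=
    le_trans (Set.ncard_le_ncard hcompl (Set.toFinite _))
      (le_trans (bad_count N (N/8)) (arith_bound hN))
  have htot : E.ncard + Eᶜ.ncard = 2^(N*N) := by
    rw [Set.ncard_add_ncard_compl, Nat.card_eq_fintype_card, Fintype.card_finset,
      Fintype.card_prod, Fintype.card_fin]
  have hpow : (2:ℕ)^(N*N-N) ≤ 2^(N*N) := Nat.pow_le_pow_right (by norm_num) (by omega)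
  have hElb : 2^(N*N) - 2^(N*N-N) ≤ E.ncard := by omega
  have hEub : E.ncard ≤ 2^(N*N) := by omega
  have hpos : (0:ℝ) < (2:ℝ)^(N*N) := by positivity
  constructor
  · rw [le_div_iff₀ hpos]
    have hcast : ((2^(N*N) - 2^(N*N-N) : ℕ) : ℝ) ≤ (E.ncard : ℝ) := Nat.cast_le.mpr hElb
    rw [Nat.cast_sub hpow] at hcast
    push_cast at hcast
    have hsplit : (2:ℝ)^(N*N-N) * 2^N = 2^(N*N) := by
      rw [← pow_add]
      congr 1
      have : N ≤ N*N := Nat.le_mul_of_pos_left N (by omega)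
      omega
    have h2N : (1/2:ℝ)^N * 2^(N*N) = 2^(N*N-N) := by
      rw [div_pow, one_pow, div_mul_eq_mul_div, one_mul, ← hsplit]
      field_simp
    calc (1 - (1/2:ℝ)^N) * 2^(N*N) = 2^(N*N) - (1/2:ℝ)^N * 2^(N*N) := by ring
      _ = 2^(N*N) - 2^(N*N-N) := by rw [h2N]
      _ ≤ (E.ncard : ℝ) := hcast
  · rw [div_le_one hpos]
    calc (E.ncard : ℝ) ≤ ((2^(N*N) : ℕ) : ℝ) := Nat.cast_le.mpr hEub
      _ = (2:ℝ)^(N*N) := by push_cast; ring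

/-- Intersection complexity of a random graph: there are constants
`c₁, c₂ > 0` such that, for `G` a uniformly random subset of `[N] × [N]`, the
probability that `c₁·N ≤ D_∩(G | 𝓖_{N,N}) ≤ c₂·N` tends to `1` as `N → ∞`. -/
theorem inter_complexity_random_graph :
    ∃ c₁ c₂ : ℝ, 0 < c₁ ∧ 0 < c₂ ∧
      Filter.Tendsto
        (fun N : ℕ =>
          (({G : Finset (Fin N × Fin N) |
              ENNReal.ofReal (c₁ * N) ≤
                ENat.toENNReal (Dcap (↑G : Set (Fin N × Fin N)) (graphGens N N)) ∧
              ENat.toENNReal (Dcap (↑G : Set (Fin N × Fin N)) (graphGens N N)) ≤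
                ENNReal.ofReal (c₂ * N)}).ncard : ℝ) / (2 : ℝ) ^ (N * N))
        Filter.atTop (nhds 1) := by
  classical
  refine ⟨1/8, 1, by norm_num, by norm_num, ?_⟩
  refine tendsto_of_tendsto_of_tendsto_of_le_of_le'
    (g := fun N : ℕ => 1 - (1/2:ℝ)^N) (h := fun _ : ℕ => (1:ℝ)) ?_ tendsto_const_nhds ?_ ?_
  · have h0 : Filter.Tendsto (fun N : ℕ => (1/2:ℝ)^N) Filter.atTop (nhds 0) :=
      tendsto_pow_atTop_nhds_zero_of_lt_one (by norm_num) (by norm_num)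
    have h1 := h0.const_sub (1:ℝ)
    simpa using h1
  · exact Filter.eventually_atTop.2 ⟨64, fun N hN => (main_bounds hN).1⟩
  · exact Filter.eventually_atTop.2 ⟨64, fun N hN => (main_bounds hN).2⟩
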